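/- If G is a randomly k-dimensional graph with k ≥ 2, then G has no cut vertex (that is, for every vertex v ∈ V(G), the graph G \ {v} obtained by deleting v remains connected). -/

import Mathlib

open SimpleGraph

/-- `W` is a resolving set for `G`: distinct vertices have distinct
metric representations with respect to `W`. -/
def IsResolvingSet {V : Type*} (G : SimpleGraph V) (W : Finset V) : Prop :=
  ∀ u v : V, u ≠ v → ∃ w ∈ W, G.dist u w ≠ G.dist v w

/-- The metric dimension `β(G)`: minimum cardinality of a resolving set. -/
noncomputable def metricDim {V : Type*} [Fintype V] (G : SimpleGraph V) : ℕ :=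
  sInf {k | ∃ W : Finset V, W.card = k ∧ IsResolvingSet G W}

/-- A (metric) basis of `G`: a resolving set of minimum cardinality. -/
def IsMetricBasis {V : Type*} [Fintype V] (G : SimpleGraph V) (B : Finset V) : Prop :=
  IsResolvingSet G B ∧ B.card = metricDim G

/-- The resolving number `res(G)`: the minimum `k` such that every `k`-set of
vertices is a resolving set. -/
noncomputable def resolvingNumber {V : Type*} [Fintype V] (G : SimpleGraph V) : ℕ :=
  sInf {k | ∀ W : Finset V, W.card = k → IsResolvingSet G W}

/-- The basis number `bas(G)`: the maximum `r` such that every `r`-set of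
vertices is contained in some basis. -/
noncomputable def basisNumber {V : Type*} [Fintype V] (G : SimpleGraph V) : ℕ :=
  sSup {r | r ≤ Fintype.card V ∧
    ∀ S : Finset V, S.card = r → ∃ B : Finset V, S ⊆ B ∧ IsMetricBasis G B}

/-- `G` is randomly `k`-dimensional: `β(G) = k` and every `k`-set of vertices
is a basis of `G`. -/
def RandomlyDimensional {V : Type*} [Fintype V] (G : SimpleGraph V) (k : ℕ) : Prop :=
  metricDim G = k ∧ ∀ W : Finset V, W.card = k → IsMetricBasis G W

section Helpers

variable {V : Type*} [Fintype V] [DecidableEq V] {G : SimpleGraph V} {k : ℕ}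

set_option linter.unusedSectionVars false

lemma resolving_mono {S T : Finset V} (hST : S ⊆ T) (hS : IsResolvingSet G S) :
    IsResolvingSet G T := by
  intro u v huv
  obtain ⟨w, hw, hne⟩ := hS u v huv
  exact ⟨w, hST hw, hne⟩

lemma metricDim_le_of_resolving {S : Finset V} (hS : IsResolvingSet G S) :
    metricDim G ≤ S.card := Nat.sInf_le ⟨S, rfl, hS⟩

/-- From a resolving set of card at most `k-1` we get a contradiction. -/
lemma no_small_resolving (hk : 2 ≤ k) (hdim : metricDim G = k)
    (hcard : k ≤ Fintype.card V) {S : Finset V} (hS : IsResolvingSet G S)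
    (hSc : S.card ≤ k - 1) : False := by
  obtain ⟨T, hsub, hTc⟩ := Finset.exists_superset_card_eq hSc (by omega)
  have := metricDim_le_of_resolving (resolving_mono hsub hS)
  rw [hdim, hTc] at this
  omega

lemma exists_resolving_card (hk : 2 ≤ k) (hdim : metricDim G = k) :
    ∃ W : Finset V, W.card = k ∧ IsResolvingSet G W := by
  have hne : {m | ∃ W : Finset V, W.card = m ∧ IsResolvingSet G W}.Nonempty := by
    by_contra hemp
    rw [Set.not_nonempty_iff_eq_empty] at hemp
    rw [metricDim, hemp, Nat.sInf_empty] at hdim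
    omega
  have h := Nat.sInf_mem hne
  rw [← metricDim, hdim] at h
  exact h

lemma erase_resolving (hG : G.Connected) (u : V) :
    IsResolvingSet G (Finset.univ.erase u) := by
  intro x y hxy
  by_cases hy : y = u
  · subst hy
    refine ⟨x, Finset.mem_erase.2 ⟨hxy, Finset.mem_univ x⟩, ?_⟩
    rw [SimpleGraph.dist_self]
    exact (hG.pos_dist_of_ne hxy.symm).ne
  · refine ⟨y, Finset.mem_erase.2 ⟨hy, Finset.mem_univ y⟩, ?_⟩
    rw [SimpleGraph.dist_self]
    exact (hG.pos_dist_of_ne hxy).ne'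

lemma factN (hG : G.Connected) (hk : 2 ≤ k) (hdim : metricDim G = k) :
    k + 1 ≤ Fintype.card V := by
  obtain ⟨W, hWc, hWres⟩ := exists_resolving_card hk hdim
  have hkn : k ≤ Fintype.card V := hWc ▸ Finset.card_le_univ W
  rcases eq_or_lt_of_le hkn with heq | hlt
  · exfalso
    have hpos : 0 < Fintype.card V := by omega
    obtain ⟨u⟩ := Fintype.card_pos_iff.mp hpos
    have hres := erase_resolving hG u
    have hc : (Finset.univ.erase u).card = Fintype.card V - 1 := by
      rw [Finset.card_erase_of_mem (Finset.mem_univ u), Finset.card_univ]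
    have := metricDim_le_of_resolving hres
    rw [hdim, hc, ← heq] at this
    omega
  · omega


lemma factP (hres : ∀ W : Finset V, W.card = k → IsResolvingSet G W)
    (hcard : k ≤ Fintype.card V) {x y : V} (hxy : x ≠ y) :
    (Finset.univ.filter fun w => G.dist x w = G.dist y w).card ≤ k - 1 := by
  by_contra hc
  push_neg at hc
  obtain ⟨W, hWsub, hWcard⟩ := Finset.exists_subset_card_eq
    (show k ≤ (Finset.univ.filter fun w => G.dist x w = G.dist y w).card by omega)
  obtain ⟨w, hwW, hwne⟩ := hres W hWcard x y hxy
  exact hwne (Finset.mem_filter.1 (hWsub hwW)).2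

lemma factR (hG : G.Connected) (hk : 2 ≤ k) (hdim : metricDim G = k)
    {S : Finset V} (hS : S.card = k - 1) :
    ∃ x y : V, x ≠ y ∧ x ∉ S ∧ y ∉ S ∧ ∀ w ∈ S, G.dist x w = G.dist y w := by
  have hnr : ¬ IsResolvingSet G S := by
    intro hres
    have := metricDim_le_of_resolving hres
    rw [hdim, hS] at this
    omega
  rw [IsResolvingSet] at hnr
  push_neg at hnr
  obtain ⟨x, y, hxy, hall⟩ := hnr
  have hxS : x ∉ S := by
    intro hx
    have := hall x hx
    rw [SimpleGraph.dist_self] at this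
    exact (hG.pos_dist_of_ne hxy.symm).ne this
  have hyS : y ∉ S := by
    intro hy
    have := hall y hy
    rw [SimpleGraph.dist_self] at this
    exact (hG.pos_dist_of_ne hxy).ne' this
  exact ⟨x, y, hxy, hxS, hyS, hall⟩

lemma walk_avoid_reachable {v : V} :
    ∀ {x y : V} (p : G.Walk x y), v ∉ p.support →
    ∀ (hx : x ∈ ({v}ᶜ : Set V)) (hy : y ∈ ({v}ᶜ : Set V)),
    (G.induce ({v}ᶜ : Set V)).Reachable ⟨x, hx⟩ ⟨y, hy⟩ := by
  intro x y p
  induction p with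
  | nil => exact fun _ _ _ => Reachable.refl _
  | @cons a b c hadj q ih =>
      intro hsup hx hy
      rw [SimpleGraph.Walk.support_cons, List.mem_cons] at hsup
      push_neg at hsup
      have hb : b ∈ ({v}ᶜ : Set V) := by
        simp only [Set.mem_compl_iff, Set.mem_singleton_iff]
        intro hbv
        exact hsup.2 (hbv ▸ q.start_mem_support)
      have h1 : (G.induce ({v}ᶜ : Set V)).Adj ⟨a, hx⟩ ⟨b, hb⟩ := by
        simp only [SimpleGraph.comap_adj, Function.Embedding.coe_subtype]
        exact hadj
      exact (h1.reachable).trans (ih hsup.2 hb hy)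

lemma chain_dist (hG : G.Connected) (u v : V) :
    ∀ j, j ≤ G.dist v u → ∃ z, G.dist v z = j ∧ j + G.dist z u = G.dist v u := by
  intro j
  induction j with
  | zero => exact fun _ => ⟨v, SimpleGraph.dist_self, Nat.zero_add _⟩
  | succ j ih =>
      intro hj
      obtain ⟨z, hz1, hz2⟩ := ih (by omega)
      have hzu : G.dist z u ≠ 0 := by omega
      obtain ⟨p, hp⟩ := (hG z u).exists_walk_length_eq_dist
      cases p with
      | nil => rw [SimpleGraph.Walk.length_nil] at hp; omega
      | @cons _ z' _ hadj q =>
          rw [SimpleGraph.Walk.length_cons] at hp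
          have h1 : G.dist z' u ≤ q.length := SimpleGraph.dist_le q
          have h2 : G.dist z z' ≤ 1 := by
            have := SimpleGraph.dist_le hadj.toWalk
            simpa using this
          have h3 : G.dist v z' ≤ G.dist v z + G.dist z z' := hG.dist_triangle
          have h4 : G.dist v u ≤ G.dist v z' + G.dist z' u := hG.dist_triangle
          exact ⟨z', by omega, by omega⟩


lemma choose_two_lt {n r : ℕ} (h3 : 3 ≤ r) (h3' : r + 3 ≤ n) :
    n.choose 2 < n.choose r := by
  have hn6 : 6 ≤ n := by omega
  have c23 : n.choose 2 < n.choose 3 := by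
    have h := Nat.choose_succ_right_eq n 2
    have hp : 0 < n.choose 2 := Nat.choose_pos (by omega)
    have h4 : 4 ≤ n - 2 := by omega
    nlinarith [h, hp, h4]
  have aux : ∀ j, 3 ≤ j → 2 * j ≤ n → n.choose 3 ≤ n.choose j := by
    intro j
    induction j with
    | zero => omega
    | succ j ih =>
        intro h3j hjn
        rcases Nat.lt_or_ge 3 (j+1) with hlt | hge
        · have hj3 : 3 ≤ j := by omega
          refine le_trans (ih hj3 (by omega)) ?_
          exact Nat.choose_le_succ_of_lt_half_left (by omega)
        · have : j + 1 = 3 := by omega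
          rw [this]
  rcases le_or_gt (2 * r) n with hle | hgt
  · exact lt_of_lt_of_le c23 (aux r h3 hle)
  · have hrn : r ≤ n := by omega
    have hsym : n.choose (n - r) = n.choose r := Nat.choose_symm hrn
    rw [← hsym]
    exact lt_of_lt_of_le c23 (aux (n - r) (by omega) (by omega))

lemma counting (hG : G.Connected) (hk4 : 4 ≤ k) (hn : k + 2 ≤ Fintype.card V)
    (hdim : metricDim G = k)
    (hres : ∀ W : Finset V, W.card = k → IsResolvingSet G W) : False := by
  classical
  set n := Fintype.card V with hn_def
  set D : V → V → Finset V := fun x y => Finset.univ.filter fun w => G.dist x w = G.dist y w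
    with hD
  have hDsymm : ∀ x y, D x y = D y x := by
    intro x y
    simp only [hD]
    apply Finset.filter_congr
    intro w _
    simp [eq_comm]
  have hkey : ∀ S : Finset V, S.card = k - 1 → ∃ x y : V, x ≠ y ∧ S = D x y := by
    intro S hS
    obtain ⟨x, y, hxy, _, _, hall⟩ := factR hG (by omega) hdim hS
    refine ⟨x, y, hxy, ?_⟩
    have hsub : S ⊆ D x y := by
      intro w hw
      simp only [hD, Finset.mem_filter]
      exact ⟨Finset.mem_univ w, hall w hw⟩
    have hDc : (D x y).card ≤ k - 1 := factP hres (by omega) hxy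
    exact Finset.eq_of_subset_of_card_le hsub (by omega)
  set f : Finset V → Finset V := fun S =>
    if h : ∃ x y : V, x ≠ y ∧ S = D x y then {h.choose, h.choose_spec.choose} else ∅ with hf
  have hmaps : ∀ S ∈ Finset.univ.powersetCard (k - 1),
      f S ∈ Finset.univ.powersetCard 2 := by
    intro S hS
    rw [Finset.mem_powersetCard] at hS
    obtain hex := hkey S hS.2
    rw [Finset.mem_powersetCard]
    refine ⟨Finset.subset_univ _, ?_⟩
    simp only [hf, dif_pos hex]
    rw [Finset.card_insert_of_notMem (by
      simp only [Finset.mem_singleton]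
      exact hex.choose_spec.choose_spec.1), Finset.card_singleton]
  have hinj : Set.InjOn f (Finset.univ.powersetCard (k - 1) : Finset (Finset V)) := by
    intro S hS S' hS' hff
    rw [Finset.mem_coe, Finset.mem_powersetCard] at hS hS'
    obtain hex := hkey S hS.2
    obtain hex' := hkey S' hS'.2
    rw [hf] at hff
    simp only [dif_pos hex, dif_pos hex'] at hff
    set x := hex.choose
    have hy := hex.choose_spec
    set y := hy.choose
    have hxy : x ≠ y ∧ S = D x y := hy.choose_spec
    set x' := hex'.choose
    have hy' := hex'.choose_spec
    set y' := hy'.choose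
    have hxy' : x' ≠ y' ∧ S' = D x' y' := hy'.choose_spec
    -- hff : {x, y} = {x', y'}
    have hx'mem : x' ∈ ({x, y} : Finset V) := by
      rw [hff]; simp; exact Or.inl rfl
    have hy'mem : y' ∈ ({x, y} : Finset V) := by
      rw [hff]; simp
    rw [Finset.mem_insert, Finset.mem_singleton] at hx'mem hy'mem
    rw [hxy.2, hxy'.2]
    rcases hx'mem with h1 | h1 <;> rcases hy'mem with h2 | h2
    · exact absurd (h1.trans h2.symm) hxy'.1
    · rw [h1, h2]
    · rw [h1, h2, hDsymm]
    · exact absurd (h1.trans h2.symm) hxy'.1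
  have hcard := Finset.card_le_card_of_injOn f hmaps hinj
  rw [Finset.card_powersetCard, Finset.card_powersetCard, Finset.card_univ, ← hn_def] at hcard
  have := choose_two_lt (show 3 ≤ k - 1 by omega) (show (k - 1) + 3 ≤ n by omega)
  omega


lemma sideSmall (hres : ∀ W : Finset V, W.card = k → IsResolvingSet G W)
    {v x y : V} {B : Finset V} (hvB : v ∉ B)
    (hxy : x ≠ y) (heq : G.dist x v = G.dist y v)
    (hKx : ∀ b ∈ B, G.dist x b = G.dist x v + G.dist v b)
    (hKy : ∀ b ∈ B, G.dist y b = G.dist y v + G.dist v b) :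
    B.card + 1 ≤ k - 1 := by
  by_contra hc
  push_neg at hc
  have hins : k ≤ (insert v B).card := by
    rw [Finset.card_insert_of_notMem hvB]; omega
  obtain ⟨W, hWsub, hWcard⟩ := Finset.exists_subset_card_eq hins
  obtain ⟨w, hwW, hwne⟩ := hres W hWcard x y hxy
  rcases Finset.mem_insert.1 (hWsub hwW) with hwv | hwB
  · exact hwne (hwv ▸ heq)
  · exact hwne (by rw [hKx w hwB, hKy w hwB, heq])

lemma L1 (hG : G.Connected) (hk : 2 ≤ k) (hdim : metricDim G = k)
    (hres : ∀ W : Finset V, W.card = k → IsResolvingSet G W)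
    (hcardV : k + 1 ≤ Fintype.card V)
    {v : V} {A B : Finset V}
    (hvA : v ∉ A) (hvB : v ∉ B) (hdisj : ∀ x ∈ A, x ∉ B)
    (hcover : ∀ x : V, x ≠ v → x ∈ A ∨ x ∈ B)
    (hBne : B.Nonempty)
    (hKDL : ∀ a ∈ A, ∀ b ∈ B, G.dist a b = G.dist a v + G.dist v b)
    (hinj : ∀ b ∈ B, ∀ b' ∈ B, G.dist v b = G.dist v b' → b = b') : False := by
  classical
  obtain ⟨u, huB, hmax⟩ := B.exists_max_image (fun b => G.dist v b) hBne
  have hvne : ∀ b ∈ B, b ≠ v := fun b hb hbv => hvB (hbv ▸ hb)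
  have hAvne : ∀ a ∈ A, a ≠ v := fun a ha hav => hvA (hav ▸ ha)
  have hposB : ∀ b ∈ B, 1 ≤ G.dist v b := fun b hb => hG.pos_dist_of_ne (Ne.symm (hvne b hb))
  have hposA : ∀ a ∈ A, 1 ≤ G.dist a v := fun a ha => hG.pos_dist_of_ne (hAvne a ha)
  have fB : ∀ y ∈ B, G.dist v y + G.dist y u = G.dist v u := by
    intro y hy
    have hj : G.dist v y ≤ G.dist v u := hmax y hy
    obtain ⟨z, hz1, hz2⟩ := chain_dist hG u v (G.dist v y) hj
    have hzB : z ∈ B := by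
      have hzv : z ≠ v := by
        intro hzv; rw [hzv, SimpleGraph.dist_self] at hz1
        have := hposB y hy; omega
      rcases hcover z hzv with hzA | hzB
      · exfalso
        have hz3 := hKDL z hzA u huB
        have hc : G.dist z v = G.dist v z := SimpleGraph.dist_comm ..
        have := hposB y hy
        omega
      · exact hzB
    have hyz : y = z := hinj y hy z hzB hz1.symm
    rw [hyz, hz1]
    exact hz2
  have gkey : ∀ x y : V, x ≠ y → G.dist x u = G.dist y u →
      x ∈ A ∧ y ∈ A ∧ G.dist x v = G.dist y v := by
    intro x y hxy hdu
    by_cases hxB : x ∈ B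
    · exfalso
      have h1 := fB x hxB
      have hx1 := hposB x hxB
      by_cases hyB : y ∈ B
      · have h2 := fB y hyB
        have : G.dist v x = G.dist v y := by omega
        exact hxy (hinj x hxB y hyB this)
      · by_cases hyv : y = v
        · rw [hyv] at hdu; omega
        · have hyA := (hcover y hyv).resolve_right hyB
          have h2 := hKDL y hyA u huB
          have hy1 := hposA y hyA
          omega
    · by_cases hyB : y ∈ B
      · exfalso
        have h1 := fB y hyB
        have hy1 := hposB y hyB
        by_cases hxv : x = v
        · rw [hxv] at hdu; omega
        · have hxA := (hcover x hxv).resolve_right hxB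
          have h2 := hKDL x hxA u huB
          have hx1 := hposA x hxA
          omega
      · by_cases hxv : x = v
        · exfalso
          by_cases hyv : y = v
          · exact hxy (hxv.trans hyv.symm)
          · have hyA := (hcover y hyv).resolve_right hyB
            have h2 := hKDL y hyA u huB
            have hy1 := hposA y hyA
            rw [hxv] at hdu
            omega
        · by_cases hyv : y = v
          · exfalso
            have hxA := (hcover x hxv).resolve_right hxB
            have h2 := hKDL x hxA u huB
            have hx1 := hposA x hxA
            rw [hyv] at hdu
            omega
          · have hxA := (hcover x hxv).resolve_right hxB
            have hyA := (hcover y hyv).resolve_right hyB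
            have h2 := hKDL x hxA u huB
            have h3 := hKDL y hyA u huB
            exact ⟨hxA, hyA, by omega⟩
  by_cases hAinj : ∀ a ∈ A, ∀ a' ∈ A, G.dist a v = G.dist a' v → a = a'
  · have hresS : IsResolvingSet G {u} := by
      intro x y hxy
      refine ⟨u, Finset.mem_singleton_self u, ?_⟩
      intro hdu
      obtain ⟨hxA, hyA, hdv⟩ := gkey x y hxy hdu
      exact hxy (hAinj x hxA y hyA hdv)
    exact no_small_resolving hk hdim (by omega) hresS
      (by rw [Finset.card_singleton]; omega)
  · push_neg at hAinj
    obtain ⟨x₀, hx₀, y₀, hy₀, heq0, hne0⟩ := hAinj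
    have hBsmall : B.card + 1 ≤ k - 1 :=
      sideSmall hres hvB hne0 heq0
        (fun b hb => hKDL x₀ hx₀ b hb) (fun b hb => hKDL y₀ hy₀ b hb)
    have hBpos : 1 ≤ B.card := Finset.card_pos.2 hBne
    have huniv : insert v (A ∪ B) = Finset.univ := by
      apply Finset.eq_univ_of_forall
      intro x
      by_cases hxv : x = v
      · rw [hxv]; exact Finset.mem_insert_self v _
      · rcases hcover x hxv with hx | hx
        · exact Finset.mem_insert_of_mem (Finset.mem_union_left _ hx)
        · exact Finset.mem_insert_of_mem (Finset.mem_union_right _ hx)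
    have hvAB : v ∉ A ∪ B := by
      rw [Finset.mem_union]; rintro (h | h)
      · exact hvA h
      · exact hvB h
    have hsum : A.card + B.card + 1 = Fintype.card V := by
      have h1 : (insert v (A ∪ B)).card = A.card + B.card + 1 := by
        rw [Finset.card_insert_of_notMem hvAB,
          Finset.card_union_of_disjoint (Finset.disjoint_left.2 hdisj)]
      rw [huniv, Finset.card_univ] at h1
      omega
    obtain ⟨T, hTsub, hTcard⟩ :=
      Finset.exists_subset_card_eq (show k - 1 - B.card ≤ A.card by omega)
    have hvBT : v ∉ B ∪ T := by
      rw [Finset.mem_union]; rintro (h | h)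
      · exact hvB h
      · exact hvA (hTsub h)
    have hBT : Disjoint B T :=
      Finset.disjoint_left.2 (fun b hb hbT => hdisj _ (hTsub hbT) hb)
    have hWcard : (insert v (B ∪ T)).card = k := by
      rw [Finset.card_insert_of_notMem hvBT, Finset.card_union_of_disjoint hBT, hTcard]
      omega
    have hTres : ∀ x y : V, x ∈ A → y ∈ A → G.dist x v = G.dist y v → x ≠ y →
        ∃ w ∈ T, G.dist x w ≠ G.dist y w := by
      intro x y hxA hyA hdv hxy
      obtain ⟨w, hwW, hwne⟩ := hres _ hWcard x y hxy
      rcases Finset.mem_insert.1 hwW with hwv | hwBT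
      · exact absurd (hwv ▸ hdv) hwne
      · rcases Finset.mem_union.1 hwBT with hwB | hwT
        · exact absurd (by rw [hKDL x hxA w hwB, hKDL y hyA w hwB, hdv]) hwne
        · exact ⟨w, hwT, hwne⟩
    have hresS : IsResolvingSet G (insert u T) := by
      intro x y hxy
      by_cases hdu : G.dist x u = G.dist y u
      · obtain ⟨hxA, hyA, hdv⟩ := gkey x y hxy hdu
        obtain ⟨w, hwT, hwne⟩ := hTres x y hxA hyA hdv hxy
        exact ⟨w, Finset.mem_insert_of_mem hwT, hwne⟩
      · exact ⟨u, Finset.mem_insert_self u T, hdu⟩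
    apply no_small_resolving hk hdim (by omega) hresS
    calc (insert u T).card ≤ T.card + 1 := Finset.card_insert_le u T
    _ ≤ k - 1 := by omega

end Helpers


theorem randomlyDimensional_no_cutVertex {V : Type*} [Fintype V] (G : SimpleGraph V)
    (hG : G.Connected) (k : ℕ) (hk : 2 ≤ k) (h : RandomlyDimensional G k) :
    ∀ v : V, (G.induce ({v}ᶜ : Set V)).Connected := by
  classical
  intro v
  by_contra hcon
  have hdim := h.1
  have hres : ∀ W : Finset V, W.card = k → IsResolvingSet G W := fun W hW => (h.2 W hW).1
  have hcardV : k + 1 ≤ Fintype.card V := factN hG hk hdim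
  obtain ⟨u₀, hu₀⟩ := Fintype.exists_ne_of_one_lt_card (show 1 < Fintype.card V by omega) v
  have hne : Nonempty ({v}ᶜ : Set V) := ⟨⟨u₀, hu₀⟩⟩
  rw [SimpleGraph.connected_iff] at hcon
  push_neg at hcon
  have hnp : ¬ (G.induce ({v}ᶜ : Set V)).Preconnected := fun hp => (hcon hp).false ⟨u₀, hu₀⟩
  unfold SimpleGraph.Preconnected at hnp
  push_neg at hnp
  obtain ⟨a₀, b₀, hab⟩ := hnp
  set B : Finset V := Finset.univ.filter
    (fun y => ∃ hy : y ∈ ({v}ᶜ : Set V), (G.induce ({v}ᶜ : Set V)).Reachable b₀ ⟨y, hy⟩)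
    with hB
  set A : Finset V := Finset.univ.filter (fun x => x ≠ v ∧ x ∉ B) with hA
  have hvB : v ∉ B := by
    rw [hB, Finset.mem_filter]
    rintro ⟨-, hy, -⟩
    exact hy rfl
  have hvA : v ∉ A := by
    rw [hA, Finset.mem_filter]
    rintro ⟨-, hvv, -⟩
    exact hvv rfl
  have hdisj : ∀ x ∈ A, x ∉ B := by
    intro x hx
    rw [hA, Finset.mem_filter] at hx
    exact hx.2.2
  have hcover : ∀ x : V, x ≠ v → x ∈ A ∨ x ∈ B := by
    intro x hxv
    by_cases hxB : x ∈ B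
    · exact Or.inr hxB
    · exact Or.inl (by rw [hA, Finset.mem_filter]; exact ⟨Finset.mem_univ x, hxv, hxB⟩)
  have hBmem : ∀ y (hy : y ∈ ({v}ᶜ : Set V)),
      (G.induce ({v}ᶜ : Set V)).Reachable b₀ ⟨y, hy⟩ → y ∈ B := by
    intro y hy hr
    rw [hB, Finset.mem_filter]
    exact ⟨Finset.mem_univ y, hy, hr⟩
  have hBne : B.Nonempty := ⟨b₀.1, hBmem b₀.1 b₀.2 (SimpleGraph.Reachable.refl _)⟩
  have haA : a₀.1 ∈ A := by
    rw [hA, Finset.mem_filter]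
    refine ⟨Finset.mem_univ _, ?_, ?_⟩
    · intro hv
      exact a₀.2 hv
    · intro haB
      rw [hB, Finset.mem_filter] at haB
      obtain ⟨-, hy, hr⟩ := haB
      exact hab hr.symm
  have hAne : A.Nonempty := ⟨a₀.1, haA⟩
  have hKDL : ∀ a ∈ A, ∀ b ∈ B, G.dist a b = G.dist a v + G.dist v b := by
    intro a haA' b hbB
    rw [hA, Finset.mem_filter] at haA'
    obtain ⟨-, hav, haB⟩ := haA'
    rw [hB, Finset.mem_filter] at hbB
    obtain ⟨-, hbv, hbr⟩ := hbB
    have hav' : a ∈ ({v}ᶜ : Set V) := hav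
    have hkey : ∀ p : G.Walk a b, v ∈ p.support := by
      intro p
      by_contra hvp
      have hr := walk_avoid_reachable p hvp hav' hbv
      exact haB (hBmem a hav' (hbr.trans hr.symm))
    obtain ⟨p, hp⟩ := (hG a b).exists_walk_length_eq_dist
    have hv := hkey p
    have h1 : G.dist a v ≤ (p.takeUntil v hv).length := SimpleGraph.dist_le _
    have h2 : G.dist v b ≤ (p.dropUntil v hv).length := SimpleGraph.dist_le _
    have h3 : (p.takeUntil v hv).length + (p.dropUntil v hv).length = p.length := by
      rw [← SimpleGraph.Walk.length_append, p.take_spec hv]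
    have h4 : G.dist a b ≤ G.dist a v + G.dist v b := hG.dist_triangle
    omega
  have hKDL' : ∀ b ∈ B, ∀ a ∈ A, G.dist b a = G.dist b v + G.dist v a := by
    intro b hb a ha
    have h0 := hKDL a ha b hb
    have c1 : G.dist b a = G.dist a b := SimpleGraph.dist_comm ..
    have c2 : G.dist b v = G.dist v b := SimpleGraph.dist_comm ..
    have c3 : G.dist v a = G.dist a v := SimpleGraph.dist_comm ..
    omega
  by_cases hn1 : Fintype.card V = k + 1
  · -- the case |V| = k + 1
    have hav : a₀.1 ≠ v := (Finset.mem_filter.1 haA).2.1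
    set a := a₀.1 with ha_def
    set S : Finset V := (Finset.univ.erase a).erase v with hS
    have hScard : S.card = k - 1 := by
      rw [hS, Finset.card_erase_of_mem (Finset.mem_erase.2 ⟨Ne.symm hav, Finset.mem_univ v⟩),
        Finset.card_erase_of_mem (Finset.mem_univ a), Finset.card_univ, hn1]
      omega
    obtain ⟨x, y, hxy, hxS, hyS, hall⟩ := factR hG hk hdim hScard
    have hmem : ∀ z : V, z ∉ S → z = a ∨ z = v := by
      intro z hz
      by_cases h1 : z = v
      · exact Or.inr h1
      by_cases h2 : z = a
      · exact Or.inl h2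
      exact absurd (Finset.mem_erase.2 ⟨h1, Finset.mem_erase.2 ⟨h2, Finset.mem_univ z⟩⟩) hz
    obtain ⟨b, hbB⟩ := hBne
    have hbS : b ∈ S := by
      refine Finset.mem_erase.2 ⟨?_, Finset.mem_erase.2 ⟨?_, Finset.mem_univ b⟩⟩
      · intro hbv
        exact hvB (hbv ▸ hbB)
      · intro hba
        exact hdisj a haA (hba ▸ hbB)
    have hd := hall b hbS
    have hKab := hKDL a haA b hbB
    have hpos : 1 ≤ G.dist a v := hG.pos_dist_of_ne hav
    rcases hmem x hxS with hx | hx <;> rcases hmem y hyS with hy | hy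
    · exact hxy (hx.trans hy.symm)
    · rw [hx, hy] at hd; omega
    · rw [hx, hy] at hd; omega
    · exact hxy (hx.trans hy.symm)
  · have hn2 : k + 2 ≤ Fintype.card V := by omega
    by_cases hinjB : ∀ b ∈ B, ∀ b' ∈ B, G.dist v b = G.dist v b' → b = b'
    · exact L1 hG hk hdim hres hcardV hvA hvB hdisj hcover hBne hKDL hinjB
    · push_neg at hinjB
      obtain ⟨b₁, hb₁, b₂, hb₂, heqB, hneB⟩ := hinjB
      by_cases hinjA : ∀ a ∈ A, ∀ a' ∈ A, G.dist v a = G.dist v a' → a = a'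
      · exact L1 hG hk hdim hres hcardV hvB hvA (fun x hx hxA => hdisj x hxA hx)
          (fun x hxv => (hcover x hxv).symm) hAne hKDL' hinjA
      · push_neg at hinjA
        obtain ⟨a₁, ha₁, a₂, ha₂, heqA, hneA⟩ := hinjA
        have hAsmall : A.card + 1 ≤ k - 1 :=
          sideSmall hres hvA hneB
            ((SimpleGraph.dist_comm ..).trans (heqB.trans (SimpleGraph.dist_comm ..)))
            (fun a ha => hKDL' b₁ hb₁ a ha) (fun a ha => hKDL' b₂ hb₂ a ha)
        have h2A : 2 ≤ A.card := Finset.one_lt_card.2 ⟨a₁, ha₁, a₂, ha₂, hneA⟩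
        exact counting hG (by omega) hn2 hdim hres
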